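/- Let G be a group with a prefiltration G_• of degree at most s, meaning G ⊇ G₀ ⊇ G₁ ⊇ ⋯ ⊇ G_s ⊇ G_{s+1} = {1} with [G_i, G_j] ⊆ G_{i+j} for all i, j ≥ 0. If g, h ∈ poly(Z, G_•) agree at the s+1 values n = 0, 1, …, s, then g(n) = h(n) for all n ∈ Z. -/

import Mathlib

/-- The discrete derivative `∂_h g (n) = g(n+h) g(n)⁻¹`. -/
def discDeriv {G : Type*} [Group G] (h : ℤ) (g : ℤ → G) : ℤ → G :=
  fun n => g (n + h) * (g n)⁻¹

/-- `g : ℤ → G` is a polynomial sequence adapted to `Gf` if every iterated discrete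
derivative of order `i` takes values in `Gf i`. -/
def IsPolySeq {G : Type*} [Group G] (Gf : ℕ → Subgroup G) (g : ℤ → G) : Prop :=
  ∀ (hs : List ℤ) (n : ℤ), (hs.foldr discDeriv g) n ∈ Gf hs.length

/-- The binomial coefficient `C(n, k)` for an integer `n` (the division is exact). -/
def zchoose (n : ℤ) (k : ℕ) : ℤ :=
  (∏ i ∈ Finset.range k, (n - (i : ℤ))) / (k.factorial : ℤ)

/-- Iterated unit-step discrete derivative. -/
def dd {G : Type*} [Group G] (g : ℤ → G) : ℕ → ℤ → G
  | 0 => g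
  | (i+1) => discDeriv 1 (dd g i)

lemma dd_eq_foldr {G : Type*} [Group G] (g : ℤ → G) (i : ℕ) :
    dd g i = (List.replicate i (1:ℤ)).foldr discDeriv g := by
  induction i with
  | zero => rfl
  | succ i ih => simp [dd, List.replicate_succ, ih]

lemma dd_mem {G : Type*} [Group G] (Gf : ℕ → Subgroup G) (g : ℤ → G)
    (hg : IsPolySeq Gf g) (i : ℕ) (n : ℤ) : dd g i n ∈ Gf i := by
  have := hg (List.replicate i 1) n
  simpa [dd_eq_foldr] using this

lemma dd_succ {G : Type*} [Group G] (g : ℤ → G) (i : ℕ) (n : ℤ) :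
    dd g (i+1) n = dd g i (n+1) * (dd g i n)⁻¹ := rfl

lemma dd_step {G : Type*} [Group G] (g : ℤ → G) (i : ℕ) (n : ℤ) :
    dd g i (n+1) = dd g (i+1) n * dd g i n := by
  rw [dd_succ]; group

lemma dd_congr {G : Type*} [Group G] (g h : ℤ → G) (i : ℕ) (n : ℤ)
    (hagr : ∀ j : ℕ, j ≤ i → g (n + j) = h (n + j)) : dd g i n = dd h i n := by
  induction i generalizing n with
  | zero => simpa [dd] using hagr 0 (le_refl 0)
  | succ i ih =>
    rw [dd_succ, dd_succ]
    rw [ih n (fun j hj => hagr j (hj.trans i.le_succ)),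
        ih (n+1) (fun j hj => by
          have e : n + 1 + (j : ℤ) = n + ((j+1 : ℕ) : ℤ) := by push_cast; ring
          rw [e]; exact hagr (j+1) (Nat.succ_le_succ hj))]

theorem polyseq_eq_of_agree_on_initial {G : Type*} [Group G] (s : ℕ) (Gf : ℕ → Subgroup G)
    (hmono : ∀ i, Gf (i + 1) ≤ Gf i)
    (hbot : ∀ i, s < i → Gf i = ⊥)
    (hcomm : ∀ i j, ⁅Gf i, Gf j⁆ ≤ Gf (i + j))
    (g h : ℤ → G) (hg : IsPolySeq Gf g) (hh : IsPolySeq Gf h)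
    (hagree : ∀ n : ℕ, n ≤ s → g (n : ℤ) = h (n : ℤ)) :
    ∀ n : ℤ, g n = h n := by
  have triv : ∀ (k : ℤ → G), IsPolySeq Gf k → ∀ i, s < i → ∀ m : ℤ, dd k i m = 1 := by
    intro k hk i hi m
    have hm := dd_mem Gf k hk i m
    rw [hbot i hi] at hm
    simpa using hm
  have key : ∀ m : ℤ, ∀ i, dd g i m = dd h i m := by
    intro m
    induction m using Int.induction_on with
    | zero =>
      intro i
      by_cases hi : s < i
      · rw [triv g hg i hi, triv h hh i hi]
      · refine dd_congr g h i 0 (fun j hj => ?_)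
        have e : (0:ℤ) + (j:ℤ) = ((j:ℕ) : ℤ) := by ring
        rw [e]
        exact hagree j (hj.trans (not_lt.mp hi))
    | succ k ih =>
      intro i
      rw [dd_step, dd_step, ih i, ih (i+1)]
    | pred k ih =>
      have aux : ∀ j i : ℕ, s + 1 ≤ i + j → dd g i (-(k:ℤ) - 1) = dd h i (-(k:ℤ) - 1) := by
        intro j
        induction j with
        | zero =>
          intro i hi
          rw [triv g hg i (by omega), triv h hh i (by omega)]
        | succ j ihj =>
          intro i hi
          by_cases hij : s + 1 ≤ i + j
          · exact ihj i hij
          · have h1 : dd g (i+1) (-(k:ℤ) - 1) = dd h (i+1) (-(k:ℤ) - 1) := ihj (i+1) (by omega)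
            have e : (-(k:ℤ) - 1) + 1 = -(k:ℤ) := by ring
            have h2 : dd g i (-(k:ℤ)) = dd h i (-(k:ℤ)) := ih i
            have sg := dd_step g i (-(k:ℤ) - 1)
            have sh := dd_step h i (-(k:ℤ) - 1)
            rw [e] at sg sh
            have : dd g (i+1) (-(k:ℤ)-1) * dd g i (-(k:ℤ)-1)
                 = dd h (i+1) (-(k:ℤ)-1) * dd h i (-(k:ℤ)-1) := by
              rw [← sg, ← sh, h2]
            rw [h1] at this
            exact mul_left_cancel this
      intro i
      exact aux (s+1) i (by omega)
  intro n
  exact key n 0
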